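/- Let D be an L-domain with basis B and I(D) its associated information system with witnesses. Then every state x of I(D) is a directed subset of D. -/
import Mathlib


variable {A : Type*}

/-- An information system with witnesses `(A, Con, ⊢, Δ)`. -/
structure IsISW (Δ : A) (Con : A → Finset A → Prop)
    (ent : A → Finset A → A → Prop) : Prop where
  dom : ∀ i X a, ent i X a → Con i X
  ax1 : ∀ i, Con i {i}
  ax2 : ∀ i (X Y : Finset A), Y ⊆ X → Con i X → Con i Y
  ax3 : ∀ i, ent i ∅ Δ
  ax4 : ∀ i (X Y : Finset A), Con i X → (∀ b ∈ Y, ent i X b) → Con i Y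
  ax5 : ∀ i (X Y : Finset A) (a : A), Con i X → Con i Y → X ⊆ Y → ent i X a → ent i Y a
  ax6 : ∀ i (X Y : Finset A) (a : A), Con i X → (∀ b ∈ Y, ent i X b) → ent i Y a → ent i X a
  ax7 : ∀ i j : A, Con j {i} → ∀ X, Con i X → Con j X
  ax8 : ∀ (i j : A) (X : Finset A) (a : A), Con j {i} → Con i X → ent i X a → ent j X a
  ax9 : ∀ (i j : A) (X : Finset A) (a : A), Con j {i} → Con i X → ent j X a → ent i X a
  ax10 : ∀ i (X Y : Finset A), Con i X → (∀ b ∈ Y, ent i X b) →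
      ∃ e Z, Con e Z ∧ ent i X e ∧ (∀ b ∈ Z, ent i X b) ∧ (∀ b ∈ Y, ent e Z b)

/-- A state of an information system with witnesses: finitely consistent with a
witness in the state (ST1), entailment-closed (ST2), every element derivable (ST3). -/
def IsState (Con : A → Finset A → Prop) (ent : A → Finset A → A → Prop)
    (x : Set A) : Prop :=
  (∀ F : Finset A, ↑F ⊆ x → ∃ i ∈ x, Con i F) ∧
  (∀ i ∈ x, ∀ X : Finset A, ↑X ⊆ x → Con i X → ∀ a, ent i X a → a ∈ x) ∧
  (∀ a ∈ x, ∃ i ∈ x, ∃ X : Finset A, ↑X ⊆ x ∧ Con i X ∧ ent i X a)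

variable {D : Type*}

/-- The way-below (approximation) relation on a poset. -/
def WayBelowP [PartialOrder D] (x y : D) : Prop :=
  ∀ S : Set D, S.Nonempty → DirectedOn (· ≤ ·) S → ∀ s, IsLUB S s → y ≤ s → ∃ u ∈ S, x ≤ u

/-- Directed completeness of a poset. -/
def IsDcpo (D : Type*) [PartialOrder D] : Prop :=
  ∀ S : Set D, S.Nonempty → DirectedOn (· ≤ ·) S → ∃ s, IsLUB S s

/-- `B` is a basis of the poset `D`. -/
def IsBasisOf [PartialOrder D] (B : Set D) : Prop :=
  ∀ x : D, ∃ S : Set D, S ⊆ {b ∈ B | WayBelowP b x} ∧ S.Nonempty ∧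
    DirectedOn (· ≤ ·) S ∧ IsLUB S x

/-- `D` is an L-domain: a directed-complete pointed poset in which any pair of
elements bounded by `z` has a least upper bound in `↓z` (continuity is imposed
separately via the existence of a basis). -/
def IsLDomain (D : Type*) [PartialOrder D] [OrderBot D] : Prop :=
  IsDcpo D ∧ ∀ x y z : D, x ≤ z → y ≤ z →
    ∃ s, s ≤ z ∧ x ≤ s ∧ y ≤ s ∧ ∀ w, w ≤ z → x ≤ w → y ≤ w → s ≤ w

/-- `s` is the least upper bound of `S` relative to the principal ideal `↓z`. -/
def LubIn [PartialOrder D] (z : D) (S : Set D) (s : D) : Prop :=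
  s ≤ z ∧ (∀ a ∈ S, a ≤ s) ∧ ∀ w, w ≤ z → (∀ a ∈ S, a ≤ w) → s ≤ w

/-- Consistency predicate of the information system `I(D)` built on a basis `B`. -/
def ConI [PartialOrder D] (B : Set D) (i : B) (X : Finset B) : Prop :=
  ∀ a ∈ X, (a : D) ≤ (i : D)

/-- Entailment of `I(D)`: `(i,X) ⊢ a` iff `a ≪ ⨆ⁱX`. -/
def entI [PartialOrder D] (B : Set D) (i : B) (X : Finset B) (a : B) : Prop :=
  ∃ s : D, LubIn (i : D) (Subtype.val '' (X : Set B)) s ∧ WayBelowP (a : D) s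

theorem stmt15 [PartialOrder D] [OrderBot D] (B : Set D)
    (hL : IsLDomain D) (hB : IsBasisOf B) (hbot : (⊥ : D) ∈ B)
    (x : Set B) (hx : IsState (ConI B) (entI B) x) :
    (Subtype.val '' x).Nonempty ∧ DirectedOn (· ≤ ·) (Subtype.val '' x) := by
  classical
  obtain ⟨st1, _, _⟩ := hx
  constructor
  · obtain ⟨i, hi, _⟩ := st1 ∅ (by simp)
    exact ⟨i, ⟨i, hi, rfl⟩⟩
  · rintro _ ⟨a, ha, rfl⟩ _ ⟨b, hb, rfl⟩
    obtain ⟨i, hi, hcon⟩ := st1 {a, b} (by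
      intro c hc
      simp only [Finset.coe_insert, Finset.coe_singleton, Set.mem_insert_iff,
        Set.mem_singleton_iff] at hc
      rcases hc with h | h <;> subst h <;> assumption)
    refine ⟨i, ⟨i, hi, rfl⟩, hcon a (by simp), hcon b (by simp)⟩
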